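/- Telescoping step for linear contracts: Suppose for ratios ρ_i = 1 − 2^{−i}, i = 1,...,k, and actions a_i (best response to ρ_i-linear contract) with values V_i = V_{a_i} and costs c_i, the IC constraints ρ_i V_{i+1} − c_{i+1} ≤ ρ_i V_i − c_i hold for all i = 1,...,k−1, and c_1 ≥ 0, V_i ∈ [0,1]. Then V_k − c_k ≤ 2 Σ_{i=1}^{k} (1−ρ_i)V_i. -/
import Mathlib


/-- Telescoping step for linear contracts. With ratios
`ρ i = 1 − 2^{−i}` and IC constraints `ρ i · V (i+1) − c (i+1) ≤ ρ i · V i − c i`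
for `i = 1,…,k−1`, together with `c 1 ≥ 0` and `V i ∈ [0,1]`, we get
`V k − c k ≤ 2 ∑_{i=1}^{k} (1 − ρ i) V i`. -/
theorem linear_contract_telescoping (k : ℕ) (hk : 1 ≤ k)
    (V c : ℕ → ℝ)
    (hIC : ∀ i : ℕ, 1 ≤ i → i < k →
      (1 - 2 ^ (-(i : ℤ))) * V (i + 1) - c (i + 1)
        ≤ (1 - 2 ^ (-(i : ℤ))) * V i - c i)
    (hc1 : 0 ≤ c 1)
    (hV : ∀ i : ℕ, 1 ≤ i → i ≤ k → V i ∈ Set.Icc (0 : ℝ) 1) :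
    V k - c k ≤ 2 * ∑ i ∈ Finset.Icc 1 k, (1 - (1 - 2 ^ (-(i : ℤ)))) * V i := by
  induction k, hk using Nat.le_induction with
  | base =>
    have hV1 := (hV 1 le_rfl le_rfl).1
    simp only [Finset.Icc_self, Finset.sum_singleton]
    have : (1 : ℝ) - (1 - 2 ^ (-(1 : ℕ) : ℤ)) = 1/2 := by norm_num
    rw [this]
    linarith
  | succ n hn ih =>
    have hIH := ih (fun i h1 h2 => hIC i h1 (h2.trans (Nat.lt_succ_self n)))
      (fun i h1 h2 => hV i h1 (h2.trans (Nat.le_succ n)))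
    have hICn := hIC n hn (Nat.lt_succ_self n)
    have hVn := (hV n hn (Nat.le_succ n)).1
    have hVn1 := (hV (n+1) (by omega) le_rfl).1
    have hpow : (0:ℝ) < 2 ^ (-(n : ℤ)) := by positivity
    rw [Finset.sum_Icc_succ_top (by omega : 1 ≤ n + 1), mul_add]
    push_cast
    have h1 : (1 : ℝ) - (1 - 2 ^ (-((n:ℤ) + 1))) = 2 ^ (-((n:ℤ)+1)) := by ring
    rw [h1]
    have h2 : (2:ℝ) * (2 ^ (-((n:ℤ)+1)) * V (n+1)) = 2 ^ (-(n:ℤ)) * V (n+1) := by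
      have : (-((n:ℤ)+1)) = -(n:ℤ) + (-1) := by ring
      rw [this, zpow_add₀ (by norm_num : (2:ℝ) ≠ 0) (-(n:ℤ)) (-1)]
      norm_num; ring
    rw [h2]
    nlinarith [mul_nonneg hpow.le hVn]
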